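/- arXiv:1403.5673 — 2 statements merged into one kernel-verified Lean document; each statement's English description precedes it below -/
import Mathlib

section
/- Let F be a field and let n ≥ 1, m ≥ 1. The algebra R_{n,m} of m generic n × n matrices over F is an integral domain, i.e. it has no zero divisors: if u, v ∈ R_{n,m} and uv = 0 then u = 0 or v = 0. (Amitsur's theorem.) -/
set_option synthInstance.maxHeartbeats 1000000
set_option maxHeartbeats 2000000

namespace Amitsur

open Fin.NatCast Fin.CommRing

variable (F : Type) [Field F] (n : ℕ) [NeZero n]

abbrev P0 : Type := MvPolynomial (Fin n) F
abbrev L : Type := FractionRing (P0 F n)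
noncomputable abbrev PL : Type := Polynomial (L F n)
abbrev W : Type := FractionRing (PL F n)

noncomputable def y (i : Fin n) : L F n := algebraMap (P0 F n) (L F n) (MvPolynomial.X i)

lemma y_injective : Function.Injective (y F n) := by
  intro i j h
  have h2 := (IsFractionRing.injective (P0 F n) (L F n)) h
  by_contra hne
  have := congrArg (MvPolynomial.eval (fun k => if k = i then (1:F) else 0)) h2
  simp [MvPolynomial.eval_X, hne, Ne.symm hne] at this

noncomputable def sg : L F n →+* L F n :=
  IsFractionRing.lift (g := (algebraMap (P0 F n) (L F n)).comp
      (MvPolynomial.rename (fun i : Fin n => i + 1)).toRingHom)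
    (by
      apply Function.Injective.comp (IsFractionRing.injective (P0 F n) (L F n))
      exact MvPolynomial.rename_injective _ (fun a b h => by
        simpa using congrArg (· + (-1 : Fin n)) h))

lemma sg_algebraMap (p : P0 F n) :
    sg F n (algebraMap (P0 F n) (L F n) p)
      = algebraMap (P0 F n) (L F n) (MvPolynomial.rename (fun i : Fin n => i + 1) p) :=
  IsFractionRing.lift_algebraMap _ _

lemma sg_pow_algebraMap (k : ℕ) (p : P0 F n) :
    (sg F n ^ k) (algebraMap (P0 F n) (L F n) p)
      = algebraMap (P0 F n) (L F n)
          (MvPolynomial.rename (fun i : Fin n => i + (k : Fin n)) p) := by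
  induction k with
  | zero =>
      simp only [pow_zero, RingHom.one_def, RingHom.id_apply, Nat.cast_zero]
      congr 1
      rw [show (fun i : Fin n => i + (0 : Fin n)) = id from funext fun i => by simp]
      simp [MvPolynomial.rename_id]
  | succ k ih =>
      rw [pow_succ', RingHom.mul_def, RingHom.comp_apply, ih, sg_algebraMap,
        MvPolynomial.rename_rename]
      rw [show ((fun i : Fin n => i + 1) ∘ fun i : Fin n => i + (k : Fin n))
          = (fun i : Fin n => i + (((k : ℕ) + 1 : ℕ) : Fin n)) from
        funext fun i => by simp only [Function.comp_apply]; push_cast; ring]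

lemma sg_pow_n : sg F n ^ n = RingHom.id (L F n) := by
  apply IsLocalization.ringHom_ext (nonZeroDivisors (P0 F n))
  ext p
  · simp only [RingHom.comp_apply, RingHom.id_apply, sg_pow_algebraMap]
    simp [MvPolynomial.rename_C]
  · simp only [RingHom.comp_apply, RingHom.id_apply, sg_pow_algebraMap]
    simp [MvPolynomial.rename_X, Fin.natCast_self]

lemma sg_pow_y (k : ℕ) (i : Fin n) : (sg F n ^ k) (y F n i) = y F n (i + (k : Fin n)) := by
  rw [y, sg_pow_algebraMap, MvPolynomial.rename_X, y]

lemma sg_pow_algebraMapF (k : ℕ) (a : F) :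
    (sg F n ^ k) (algebraMap F (L F n) a) = algebraMap F (L F n) a := by
  rw [IsScalarTower.algebraMap_apply F (P0 F n) (L F n), sg_pow_algebraMap]
  simp


noncomputable def SP (k : ℕ) : PL F n →+* PL F n := Polynomial.mapRingHom (sg F n ^ k)

lemma SP_apply (k : ℕ) (a : PL F n) : SP F n k a = Polynomial.map (sg F n ^ k) a := rfl

lemma SP_SP (k l : ℕ) (a : PL F n) : SP F n k (SP F n l a) = SP F n (k + l) a := by
  simp only [SP_apply, Polynomial.map_map]
  congr 1
  rw [← RingHom.mul_def, ← pow_add]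

lemma SP_mod (k : ℕ) (a : PL F n) : SP F n (k % n) a = SP F n k a := by
  simp only [SP_apply]
  congr 1
  exact (pow_eq_pow_mod k (sg_pow_n F n)).symm

lemma SP_zero (a : PL F n) : SP F n 0 a = a := by
  simp only [SP_apply, pow_zero, RingHom.one_def, Polynomial.map_id, RingHom.id_apply]

lemma SP_X (k : ℕ) : SP F n k Polynomial.X = Polynomial.X := by
  simp [SP_apply]

lemma SP_injective (k : ℕ) : Function.Injective (SP F n k) :=
  Polynomial.map_injective _ (RingHom.injective _)

lemma SP_algebraMapF (k : ℕ) (f : F) :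
    SP F n k (algebraMap F (PL F n) f) = algebraMap F (PL F n) f := by
  rw [Polynomial.algebraMap_apply, SP_apply, Polynomial.map_C, sg_pow_algebraMapF,
    ← Polynomial.algebraMap_apply]

noncomputable def Gm (a : PL F n) (i : Fin n) : Matrix (Fin n) (Fin n) (PL F n) :=
  Matrix.of fun p q =>
    if q = p + i then SP F n (p : ℕ) a * Polynomial.X ^ (((p : ℕ) + (i : ℕ)) / n) else 0

lemma Gm_apply (a : PL F n) (i p q : Fin n) :
    Gm F n a i p q =
      if q = p + i then SP F n (p : ℕ) a * Polynomial.X ^ (((p : ℕ) + (i : ℕ)) / n) else 0 := rfl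

lemma Gm_sum {ι : Type} (s : Finset ι) (g : ι → PL F n) (k : Fin n) :
    Gm F n (∑ x ∈ s, g x) k = ∑ x ∈ s, Gm F n (g x) k := by
  ext p q
  by_cases h : q = p + k <;>
    simp [Gm_apply, h, Matrix.sum_apply, Finset.sum_mul]

private lemma div_aux (x z N : ℕ) (hN : 0 < N) : x / N + (x % N + z) / N = (x + z) / N := by
  conv_rhs => rw [← Nat.mod_add_div x N]
  rw [add_right_comm, Nat.add_mul_div_left _ _ hN, add_comm]

private lemma shuffle1 (A B : PL F n) (s t : ℕ) :
    A * Polynomial.X ^ s * (B * Polynomial.X ^ t) = A * B * Polynomial.X ^ (s + t) := by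
  rw [pow_add]; ring

private lemma shuffle2 (A B : PL F n) (s t : ℕ) :
    A * (B * Polynomial.X ^ s) * Polynomial.X ^ t = A * B * Polynomial.X ^ (s + t) := by
  rw [pow_add]; ring

lemma Gm_mul (a b : PL F n) (i j : Fin n) :
    Gm F n a i * Gm F n b j =
      Gm F n (a * SP F n (i : ℕ) b * Polynomial.X ^ (((i : ℕ) + (j : ℕ)) / n)) (i + j) := by
  have hn : 0 < n := Nat.pos_of_ne_zero (NeZero.ne n)
  apply Matrix.ext; intro p q
  rw [Matrix.mul_apply]
  rw [Finset.sum_eq_single (p + i)]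
  · rw [Gm_apply, Gm_apply, Gm_apply, if_pos rfl]
    by_cases h : q = p + i + j
    · rw [if_pos h, if_pos (show q = p + (i + j) by rw [h]; exact add_assoc p i j)]
      rw [map_mul, map_mul, map_pow, SP_X, SP_SP]
      rw [show ((p + i : Fin n) : ℕ) = ((p : ℕ) + (i : ℕ)) % n from Fin.val_add p i, SP_mod]
      rw [shuffle1]
      conv_rhs => rw [mul_assoc, ← pow_add]
      congr 1
      rw [div_aux _ _ _ hn, Fin.val_add,
        add_comm ((p:ℕ)) ((((i:ℕ) + (j:ℕ))) % n), div_aux _ _ _ hn]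
      have : (p:ℕ) + (i:ℕ) + (j:ℕ) = (i:ℕ) + (j:ℕ) + (p:ℕ) := by omega
      rw [this]
    · rw [if_neg h, mul_zero,
        if_neg (fun hc : q = p + (i + j) => h (hc.trans (add_assoc p i j).symm))]
  · intro s _ hs
    rw [Gm_apply, if_neg hs, zero_mul]
  · intro h; exact absurd (Finset.mem_univ _) h

lemma Gm_add (a b : PL F n) (i : Fin n) : Gm F n (a + b) i = Gm F n a i + Gm F n b i := by
  apply Matrix.ext; intro p q
  by_cases h : q = p + i <;>
    simp [Gm_apply, h, Matrix.add_apply, RingHom.map_add, add_mul]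

lemma Gm_zero (i : Fin n) : Gm F n 0 i = 0 := by
  apply Matrix.ext; intro p q
  by_cases h : q = p + i <;> simp [Gm_apply, h]

lemma Gm_one : Gm F n 1 0 = 1 := by
  apply Matrix.ext; intro p q
  by_cases h : q = p
  · subst h
    simp [Gm_apply, Matrix.one_apply, Nat.div_eq_of_lt q.isLt]
  · have h' : ¬ p = q := fun hh => h hh.symm
    simp [Gm_apply, Matrix.one_apply, h, h']

lemma Gm_algebraMap (f : F) :
    algebraMap F (Matrix (Fin n) (Fin n) (PL F n)) f = Gm F n (algebraMap F (PL F n) f) 0 := by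
  apply Matrix.ext; intro p q
  by_cases h : q = p
  · subst h
    simp [Gm_apply, Matrix.algebraMap_matrix_apply, SP_apply, Polynomial.map_C,
      sg_pow_algebraMapF, Nat.div_eq_of_lt q.isLt]
  · have h' : ¬ p = q := fun hh => h hh.symm
    simp [Gm_apply, Matrix.algebraMap_matrix_apply, h, h']

noncomputable def conv (a b : Fin n → PL F n) (k : Fin n) : PL F n :=
  ∑ i, a i * SP F n (i : ℕ) (b (k - i)) * Polynomial.X ^ (((i : ℕ) + ((k - i : Fin n) : ℕ)) / n)

lemma sum_Gm_mul (a b : Fin n → PL F n) :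
    (∑ i, Gm F n (a i) i) * (∑ j, Gm F n (b j) j) = ∑ k, Gm F n (conv F n a b k) k := by
  rw [Finset.sum_mul_sum]
  have step1 : ∀ i : Fin n, ∑ j, Gm F n (a i) i * Gm F n (b j) j
      = ∑ k, Gm F n (a i * SP F n (i : ℕ) (b (k - i))
          * Polynomial.X ^ (((i : ℕ) + ((k - i : Fin n) : ℕ)) / n)) k := by
    intro i
    apply Fintype.sum_equiv (Equiv.addLeft i)
    intro j
    rw [Gm_mul]
    congr 2 <;> simp [Equiv.addLeft]
  rw [Finset.sum_congr rfl (fun i _ => step1 i), Finset.sum_comm]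
  exact Finset.sum_congr rfl (fun k _ => (Gm_sum F n _ _ _).symm)

lemma sum_Gm_row0 (a : Fin n → PL F n) (q : Fin n) : (∑ i, Gm F n (a i) i) 0 q = a q := by
  rw [Matrix.sum_apply]
  rw [Finset.sum_eq_single q]
  · rw [Gm_apply, if_pos (zero_add q).symm, Fin.val_zero, zero_add, SP_zero,
      Nat.div_eq_of_lt q.isLt, pow_zero, mul_one]
  · intro s _ hs
    rw [Gm_apply, if_neg (by rw [zero_add]; exact fun hh => hs hh.symm)]
  · intro h; exact absurd (Finset.mem_univ _) h

noncomputable def DD : Subalgebra F (Matrix (Fin n) (Fin n) (PL F n)) where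
  carrier := {x | ∃ a : Fin n → PL F n, x = ∑ i, Gm F n (a i) i}
  mul_mem' := by
    rintro x y ⟨a, rfl⟩ ⟨b, rfl⟩
    exact ⟨conv F n a b, sum_Gm_mul F n a b⟩
  add_mem' := by
    rintro x y ⟨a, rfl⟩ ⟨b, rfl⟩
    refine ⟨a + b, ?_⟩
    rw [← Finset.sum_add_distrib]
    exact Finset.sum_congr rfl fun i _ => by rw [Pi.add_apply, Gm_add]
  algebraMap_mem' := by
    intro f
    refine ⟨fun i => if i = 0 then algebraMap F (PL F n) f else 0, ?_⟩
    rw [Finset.sum_eq_single 0]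
    · simp [Gm_algebraMap]
    · intro s _ hs; simp [hs, Gm_zero]
    · intro h; exact absurd (Finset.mem_univ _) h

lemma mem_DD {x : Matrix (Fin n) (Fin n) (PL F n)} :
    x ∈ DD F n ↔ ∃ a : Fin n → PL F n, x = ∑ i, Gm F n (a i) i := Iff.rfl

lemma SP_support (k : ℕ) (b : PL F n) : (SP F n k b).support = b.support :=
  Polynomial.support_map_of_injective _ (RingHom.injective _)

lemma SP_natTrailingDegree (k : ℕ) (b : PL F n) :
    (SP F n k b).natTrailingDegree = b.natTrailingDegree := by
  unfold Polynomial.natTrailingDegree Polynomial.trailingDegree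
  rw [SP_support]

lemma SP_trailingCoeff (k : ℕ) (b : PL F n) :
    (SP F n k b).trailingCoeff = (sg F n ^ k) b.trailingCoeff := by
  unfold Polynomial.trailingCoeff
  rw [SP_natTrailingDegree, SP_apply, Polynomial.coeff_map]

lemma SP_ne_zero (k : ℕ) {b : PL F n} (hb : b ≠ 0) : SP F n k b ≠ 0 :=
  fun h => hb (SP_injective F n k (h.trans (map_zero _).symm))

/-- trailing degree of a term `a * SP i b * X ^ e`. -/
lemma term_ntd {a b : PL F n} (ha : a ≠ 0) (hb : b ≠ 0) (i e : ℕ) :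
    (a * SP F n i b * Polynomial.X ^ e).natTrailingDegree
      = a.natTrailingDegree + b.natTrailingDegree + e := by
  rw [Polynomial.natTrailingDegree_mul (mul_ne_zero ha (SP_ne_zero F n i hb))
    (pow_ne_zero _ Polynomial.X_ne_zero),
    Polynomial.natTrailingDegree_mul ha (SP_ne_zero F n i hb),
    Polynomial.natTrailingDegree_X_pow, SP_natTrailingDegree]

lemma term_tc (a b : PL F n) (i e : ℕ) :
    (a * SP F n i b * Polynomial.X ^ e).trailingCoeff
      = a.trailingCoeff * (sg F n ^ i) b.trailingCoeff := by
  rw [Polynomial.trailingCoeff_mul, Polynomial.trailingCoeff_mul, SP_trailingCoeff]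
  have : (Polynomial.X ^ e : PL F n).trailingCoeff = 1 := by
    unfold Polynomial.trailingCoeff
    rw [Polynomial.natTrailingDegree_X_pow, Polynomial.coeff_X_pow, if_pos rfl]
  rw [this, mul_one]

lemma conv_ne_zero {a b : Fin n → PL F n} (ha : a ≠ 0) (hb : b ≠ 0) :
    ∃ k, conv F n a b k ≠ 0 := by
  classical
  have hn : 0 < n := Nat.pos_of_ne_zero (NeZero.ne n)
  -- weights
  set w : (Fin n → PL F n) → Fin n → ℕ :=
    fun c i => n * (c i).natTrailingDegree + (i : ℕ) with hw
  have wmod : ∀ (c : Fin n → PL F n) (i : Fin n), w c i % n = (i : ℕ) := by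
    intro c i
    simp [hw, Nat.mul_add_mod, Nat.mod_eq_of_lt i.isLt]
  -- minimizers
  have hsa : (Finset.univ.filter (fun i => a i ≠ 0)).Nonempty := by
    obtain ⟨i, hi⟩ := Function.ne_iff.mp ha
    exact ⟨i, by simpa using hi⟩
  have hsb : (Finset.univ.filter (fun j => b j ≠ 0)).Nonempty := by
    obtain ⟨j, hj⟩ := Function.ne_iff.mp hb
    exact ⟨j, by simpa using hj⟩
  obtain ⟨i0, hi0mem, hi0min⟩ := Finset.exists_min_image _ (w a) hsa
  obtain ⟨j0, hj0mem, hj0min⟩ := Finset.exists_min_image _ (w b) hsb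
  have hai0 : a i0 ≠ 0 := by simpa using hi0mem
  have hbj0 : b j0 ≠ 0 := by simpa using hj0mem
  have ha_strict : ∀ i : Fin n, a i ≠ 0 → i ≠ i0 → w a i0 < w a i := by
    intro i hi hne
    rcases lt_or_eq_of_le (hi0min i (by simp [hi])) with h | h
    · exact h
    · exfalso
      apply hne
      have := congrArg (· % n) h
      simp only [wmod] at this
      exact Fin.val_injective this.symm
  have hb_mono : ∀ j : Fin n, b j ≠ 0 → w b j0 ≤ w b j := fun j hj =>
    hj0min j (by simp [hj])
  refine ⟨i0 + j0, ?_⟩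
  set δ : ℕ := (a i0).natTrailingDegree + (b j0).natTrailingDegree
      + (((i0 : ℕ) + ((j0 : ℕ))) / n) with hδ
  intro hzero
  have hcoeff : (conv F n a b (i0 + j0)).coeff δ = 0 := by rw [hzero]; simp
  rw [conv, Polynomial.finset_sum_coeff] at hcoeff
  rw [Finset.sum_eq_single i0] at hcoeff
  · rw [add_sub_cancel_left] at hcoeff
    have hne : (a i0 * SP F n (i0 : ℕ) (b j0)
        * Polynomial.X ^ (((i0 : ℕ) + ((j0 : ℕ))) / n)) ≠ 0 :=
      mul_ne_zero (mul_ne_zero hai0 (SP_ne_zero F n _ hbj0))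
        (pow_ne_zero _ Polynomial.X_ne_zero)
    have hτ : (a i0 * SP F n (i0 : ℕ) (b j0)
        * Polynomial.X ^ (((i0 : ℕ) + ((j0 : ℕ))) / n)).natTrailingDegree = δ :=
      term_ntd F n hai0 hbj0 _ _
    have : (a i0 * SP F n (i0 : ℕ) (b j0)
        * Polynomial.X ^ (((i0 : ℕ) + ((j0 : ℕ))) / n)).trailingCoeff = 0 := by
      unfold Polynomial.trailingCoeff
      rw [hτ]; exact hcoeff
    rw [term_tc] at this
    rcases mul_eq_zero.mp this with h | h
    · exact hai0 (Polynomial.trailingCoeff_eq_zero.mp h)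
    · have : (b j0).trailingCoeff = 0 :=
        (map_eq_zero_iff _ (RingHom.injective _)).mp h
      exact hbj0 (Polynomial.trailingCoeff_eq_zero.mp this)
  · intro i _ hine
    set j : Fin n := i0 + j0 - i with hj
    by_cases hai : a i = 0
    · simp [hai]
    by_cases hbj : b j = 0
    · simp [← hj, hbj]
    -- nonzero term with strictly larger trailing degree
    have hsum : (i : ℕ) + (j : ℕ) = n * (((i : ℕ) + (j : ℕ)) / n) + ((i0 + j0 : Fin n) : ℕ) := by
      have hij : i + j = i0 + j0 := by rw [hj, add_sub_cancel]
      have : ((i : ℕ) + (j : ℕ)) % n = ((i0 + j0 : Fin n) : ℕ) := by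
        rw [← Fin.val_add, hij]
      rw [← this, Nat.div_add_mod]
    have hwsum : n * ((a i * SP F n (i : ℕ) (b j)
        * Polynomial.X ^ (((i : ℕ) + (j : ℕ)) / n)).natTrailingDegree)
          + ((i0 + j0 : Fin n) : ℕ) = w a i + w b j := by
      rw [term_ntd F n hai hbj, hw]
      simp only []
      rw [Nat.mul_add, Nat.mul_add]
      omega
    have hwsum0 : n * δ + ((i0 + j0 : Fin n) : ℕ) = w a i0 + w b j0 := by
      have h0 : (i0 : ℕ) + (j0 : ℕ) = n * (((i0 : ℕ) + (j0 : ℕ)) / n)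
          + ((i0 + j0 : Fin n) : ℕ) := by
        rw [Fin.val_add, Nat.div_add_mod]
      rw [hδ, hw]
      simp only []
      rw [Nat.mul_add, Nat.mul_add]
      omega
    have hlt : w a i0 + w b j0 < w a i + w b j :=
      Nat.lt_of_lt_of_le
        (Nat.add_lt_add_right (ha_strict i hai hine) _)
        (Nat.add_le_add_left (hb_mono j hbj) _)
    have hτlt : δ < (a i * SP F n (i : ℕ) (b j)
        * Polynomial.X ^ (((i : ℕ) + (j : ℕ)) / n)).natTrailingDegree := by
      apply Nat.lt_of_mul_lt_mul_left (a := n)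
      omega
    exact Polynomial.coeff_eq_zero_of_lt_natTrailingDegree hτlt
  · intro h; exact absurd (Finset.mem_univ _) h

theorem DD_mul_ne_zero {x z : Matrix (Fin n) (Fin n) (PL F n)}
    (hx : x ∈ DD F n) (hz : z ∈ DD F n) (hxne : x ≠ 0) (hzne : z ≠ 0) : x * z ≠ 0 := by
  obtain ⟨a, rfl⟩ := hx
  obtain ⟨b, rfl⟩ := hz
  have ha : a ≠ 0 := by
    rintro rfl
    exact hxne (by simp [Gm_zero])
  have hb : b ≠ 0 := by
    rintro rfl
    exact hzne (by simp [Gm_zero])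
  rw [sum_Gm_mul]
  intro h0
  obtain ⟨k, hk⟩ := conv_ne_zero F n ha hb
  apply hk
  have := congrFun (congrFun h0 0) k
  rwa [sum_Gm_row0, Matrix.zero_apply] at this

-- ## The span lemma

lemma SP_C (k : ℕ) (c : L F n) : SP F n k (Polynomial.C c) = Polynomial.C ((sg F n ^ k) c) :=
  Polynomial.map_C _

noncomputable def iW : PL F n →+* W F n := algebraMap (PL F n) (W F n)

lemma iW_injective : Function.Injective (iW F n) := IsFractionRing.injective _ _

noncomputable def eW (r : Fin n × Fin n) : Matrix (Fin n) (Fin n) (W F n) :=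
  (Gm F n (Polynomial.C (y F n 0 ^ (r.1 : ℕ))) r.2).map (iW F n)

noncomputable def yW (p : Fin n) : W F n := iW F n (Polynomial.C (y F n p))

lemma yW_injective : Function.Injective (yW F n) := fun i j h =>
  y_injective F n (Polynomial.C_injective (iW_injective F n h))

instance : Infinite (W F n) := Infinite.of_injective (iW F n) (iW_injective F n)

noncomputable def tW : W F n := iW F n Polynomial.X

lemma tW_ne_zero : tW F n ≠ 0 := fun h =>
  Polynomial.X_ne_zero (iW_injective F n (h.trans (map_zero _).symm))

noncomputable def V : Matrix (Fin n) (Fin n) (W F n) := Matrix.vandermonde (yW F n)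

lemma V_unit : IsUnit (V F n).det := by
  rw [isUnit_iff_ne_zero, Ne, V]
  rw [show ((Matrix.vandermonde (yW F n)).det = 0) ↔ ¬ ((Matrix.vandermonde (yW F n)).det ≠ 0)
    from (not_not.symm : _)]
  rw [Matrix.det_vandermonde_ne_zero_iff]
  exact fun h => h (yW_injective F n)

lemma eW_apply (q i p' q' : Fin n) :
    eW F n (q, i) p' q' = if q' = p' + i
      then yW F n p' ^ (q : ℕ) * tW F n ^ (((p' : ℕ) + (i : ℕ)) / n) else 0 := by
  rw [eW, Matrix.map_apply, Gm_apply]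
  by_cases h : q' = p' + i
  · rw [if_pos h, if_pos h]
    simp only [map_mul, SP_C, map_pow, sg_pow_y, zero_add, Fin.cast_val_eq_self]
    rw [yW, tW]
  · rw [if_neg h, if_neg h, map_zero]

lemma std_mem (p r : Fin n) :
    Matrix.single p r (1 : W F n) ∈ Submodule.span (W F n) (Set.range (eW F n)) := by
  have hVV : ∀ p' : Fin n, (∑ q, V F n p' q * (V F n)⁻¹ q p) = if p' = p then 1 else 0 := by
    intro p'
    rw [← Matrix.mul_apply, Matrix.mul_nonsing_inv _ (V_unit F n), Matrix.one_apply]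
  have expand : Matrix.single p r (1 : W F n)
      = ∑ q : Fin n, ((V F n)⁻¹ q p * (tW F n)⁻¹ ^ (((p : ℕ) + ((r - p : Fin n) : ℕ)) / n))
          • eW F n (q, r - p) := by
    apply Matrix.ext; intro p' q'
    rw [Matrix.sum_apply]
    simp only [Matrix.smul_apply, eW_apply, smul_eq_mul]
    by_cases hc : q' = p' + (r - p)
    · simp only [if_pos hc]
      have : ∀ q : Fin n,
          (V F n)⁻¹ q p * (tW F n)⁻¹ ^ (((p : ℕ) + ((r - p : Fin n) : ℕ)) / n)
            * (yW F n p' ^ (q : ℕ) * tW F n ^ (((p' : ℕ) + ((r - p : Fin n) : ℕ)) / n))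
          = (V F n p' q * (V F n)⁻¹ q p)
            * ((tW F n)⁻¹ ^ (((p : ℕ) + ((r - p : Fin n) : ℕ)) / n)
              * tW F n ^ (((p' : ℕ) + ((r - p : Fin n) : ℕ)) / n)) := by
        intro q
        rw [V, Matrix.vandermonde_apply]
        ring
      rw [Finset.sum_congr rfl fun q _ => this q, ← Finset.sum_mul, hVV p']
      by_cases hp : p' = p
      · subst hp
        rw [if_pos rfl, one_mul, ← mul_pow, inv_mul_cancel₀ (tW_ne_zero F n), one_pow]
        rw [Matrix.single, Matrix.of_apply,
          if_pos ⟨rfl, by rw [hc, add_sub_cancel]⟩]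
      · rw [if_neg hp, zero_mul, Matrix.single, Matrix.of_apply,
          if_neg (fun hh => hp hh.1.symm)]
    · simp only [if_neg hc, mul_zero, Finset.sum_const_zero]
      rw [Matrix.single, Matrix.of_apply, if_neg]
      rintro ⟨rfl, rfl⟩
      exact hc (by rw [add_sub_cancel])
  rw [expand]
  exact Submodule.sum_mem _ fun q _ =>
    Submodule.smul_mem _ _ (Submodule.subset_span ⟨(q, r - p), rfl⟩)

lemma span_eW : Submodule.span (W F n) (Set.range (eW F n)) = ⊤ := by
  rw [eq_top_iff]
  rintro M -
  rw [Matrix.matrix_eq_sum_single M]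
  refine Submodule.sum_mem _ fun p _ => Submodule.sum_mem _ fun r _ => ?_
  rw [show Matrix.single p r (M p r) = (M p r) • Matrix.single p r (1 : W F n)
    from by rw [Matrix.smul_single, smul_eq_mul, mul_one]]
  exact Submodule.smul_mem _ _ (std_mem F n p r)

-- ## Density

lemma exists_eval_ne_fin (T : Set (W F n)) (hT : T.Infinite) :
    ∀ (k : ℕ) (P : MvPolynomial (Fin k) (W F n)), P ≠ 0 →
      ∃ c : Fin k → W F n, (∀ r, c r ∈ T) ∧ MvPolynomial.eval c P ≠ 0 := by
  intro k
  induction k with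
  | zero =>
      intro P hP
      obtain ⟨a, rfl⟩ := MvPolynomial.C_surjective (Fin 0) P
      refine ⟨Fin.elim0, fun r => r.elim0, ?_⟩
      rw [MvPolynomial.eval_C]
      exact fun h => hP (by rw [h, map_zero])
  | succ k ih =>
      intro P hP
      set P' := MvPolynomial.finSuccEquiv (W F n) k P with hP'def
      have hP' : P' ≠ 0 := fun h =>
        hP ((map_eq_zero_iff _ (AlgEquiv.injective _)).mp (hP'def ▸ h))
      have hQ : P'.leadingCoeff ≠ 0 := Polynomial.leadingCoeff_ne_zero.mpr hP'
      obtain ⟨c', hc'T, hc'⟩ := ih _ hQ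
      set P1 : Polynomial (W F n) := P'.map (MvPolynomial.eval c') with hP1def
      have hP1 : P1 ≠ 0 := by
        intro h
        apply hc'
        have h2 : P1.coeff P'.natDegree = 0 := by rw [h]; simp
        rw [hP1def, Polynomial.coeff_map] at h2
        rw [Polynomial.leadingCoeff]
        exact h2
      have hfin : {x : W F n | Polynomial.IsRoot P1 x}.Finite :=
        Polynomial.finite_setOf_isRoot hP1
      obtain ⟨t0, ht0⟩ := (hT.diff hfin).nonempty
      refine ⟨Fin.cons t0 c', ?_, ?_⟩
      · intro r
        refine Fin.cases ?_ ?_ r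
        · exact ht0.1
        · exact hc'T
      · rw [MvPolynomial.eval_eq_eval_mv_eval']
        exact ht0.2
  -- done

lemma exists_eval_ne {ι : Type} [Fintype ι] (T : Set (W F n)) (hT : T.Infinite)
    (P : MvPolynomial ι (W F n)) (hP : P ≠ 0) :
    ∃ c : ι → W F n, (∀ r, c r ∈ T) ∧ MvPolynomial.eval c P ≠ 0 := by
  let e := Fintype.equivFin ι
  have hre : MvPolynomial.rename e P ≠ 0 := fun h =>
    hP (MvPolynomial.rename_injective e e.injective (by rw [h, map_zero]))
  obtain ⟨c, hcT, hc⟩ := exists_eval_ne_fin F n T hT _ _ hre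
  refine ⟨c ∘ e, fun r => hcT (e r), ?_⟩
  rwa [MvPolynomial.eval_rename] at hc

-- ## The substitution homomorphism

variable (m : ℕ)

noncomputable def Theta :
    MvPolynomial (Fin m × Fin n × Fin n) F →ₐ[F]
      MvPolynomial (Fin m × Fin n × Fin n) (W F n) :=
  MvPolynomial.aeval (fun v => ∑ r : Fin n × Fin n,
    MvPolynomial.X (v.1, r) * MvPolynomial.C (eW F n r v.2.1 v.2.2))

lemma theta_eval (c : Fin m × Fin n × Fin n → W F n)
    (g : MvPolynomial (Fin m × Fin n × Fin n) F) :
    MvPolynomial.eval c (Theta F n m g)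
      = MvPolynomial.aeval (R := F)
          (fun v : Fin m × Fin n × Fin n =>
            ∑ r : Fin n × Fin n, c (v.1, r) * eW F n r v.2.1 v.2.2) g := by
  have : (MvPolynomial.eval c).comp (Theta F n m).toRingHom
      = (MvPolynomial.aeval (R := F)
          (fun v : Fin m × Fin n × Fin n =>
            ∑ r : Fin n × Fin n, c (v.1, r) * eW F n r v.2.1 v.2.2)).toRingHom := by
    apply MvPolynomial.ringHom_ext
    · intro f
      simp only [RingHom.comp_apply, AlgHom.toRingHom_eq_coe, RingHom.coe_coe,
        MvPolynomial.aeval_C, MvPolynomial.eval_C]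
      rw [show (Theta F n m) (MvPolynomial.C f)
          = algebraMap F (MvPolynomial (Fin m × Fin n × Fin n) (W F n)) f from
        MvPolynomial.aeval_C _ f]
      rw [MvPolynomial.algebraMap_apply, MvPolynomial.eval_C]
    · intro v
      simp only [RingHom.comp_apply, AlgHom.toRingHom_eq_coe, RingHom.coe_coe,
        MvPolynomial.aeval_X]
      rw [show (Theta F n m) (MvPolynomial.X v) = ∑ r : Fin n × Fin n,
          MvPolynomial.X (v.1, r) * MvPolynomial.C (eW F n r v.2.1 v.2.2) from
        MvPolynomial.aeval_X _ v]
      simp only [map_sum, map_mul, MvPolynomial.eval_X, MvPolynomial.eval_C]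
  exact congrFun (congrArg (fun h => h.toFun) this) g

lemma theta_zero (g : MvPolynomial (Fin m × Fin n × Fin n) F)
    (hg : Theta F n m g = 0) : g = 0 := by
  have hz : ∀ z : Fin m × Fin n × Fin n → W F n, MvPolynomial.aeval (R := F) z g = 0 := by
    intro z
    have hmem : ∀ l : Fin m,
        (Matrix.of (fun i j => z (l, i, j)) : Matrix (Fin n) (Fin n) (W F n))
          ∈ Submodule.span (W F n) (Set.range (eW F n)) := by
      intro l; rw [span_eW]; exact Submodule.mem_top
    choose clr hclr using fun l => (Submodule.mem_span_range_iff_exists_fun (W F n)).mp (hmem l)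
    have hent : ∀ v : Fin m × Fin n × Fin n,
        ∑ r : Fin n × Fin n, (fun vv : Fin m × Fin n × Fin n => clr vv.1 vv.2) (v.1, r)
          * eW F n r v.2.1 v.2.2 = z v := by
      intro v
      have h2 := congrFun (congrFun (hclr v.1) v.2.1) v.2.2
      simpa [Matrix.sum_apply] using h2
    have hfun : (fun v : Fin m × Fin n × Fin n =>
        ∑ r : Fin n × Fin n, (fun vv : Fin m × Fin n × Fin n => clr vv.1 vv.2) (v.1, r)
          * eW F n r v.2.1 v.2.2) = z := funext hent
    calc MvPolynomial.aeval (R := F) z g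
        = MvPolynomial.eval (fun vv : Fin m × Fin n × Fin n => clr vv.1 vv.2)
            (Theta F n m g) := by rw [theta_eval, hfun]
      _ = 0 := by rw [hg, map_zero]
  have hmap : MvPolynomial.map (algebraMap F (W F n)) g = 0 := by
    apply MvPolynomial.funext (q := 0)
    intro x
    rw [MvPolynomial.eval_map, map_zero, ← MvPolynomial.aeval_def]
    exact hz x
  exact MvPolynomial.map_injective _ (RingHom.injective _) (by rw [hmap, map_zero])

lemma tW_pow_injective : Function.Injective (fun k : ℕ => tW F n ^ k) := by
  intro k1 k2 h
  have h2 : iW F n (Polynomial.X ^ k1) = iW F n (Polynomial.X ^ k2) := by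
    rw [map_pow, map_pow]; exact h
  have h3 := iW_injective F n h2
  have := congrArg Polynomial.natDegree h3
  rwa [Polynomial.natDegree_X_pow, Polynomial.natDegree_X_pow] at this

lemma iW_Gm_entry (k : ℕ) (q i2 i j : Fin n) :
    iW F n (Gm F n (Polynomial.X ^ k * Polynomial.C (y F n 0 ^ (q : ℕ))) i2 i j)
      = tW F n ^ k * eW F n (q, i2) i j := by
  rw [eW_apply, Gm_apply]
  by_cases h : j = i + i2
  · rw [if_pos h, if_pos h]
    simp only [map_mul, map_pow, SP_X, SP_C, sg_pow_y, zero_add, Fin.cast_val_eq_self]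
    rw [yW, tW]
    ring
  · rw [if_neg h, if_neg h, map_zero, mul_zero]

end Amitsur

/-- The `l`-th generic `n × n` matrix: the matrix whose `(i,j)` entry is the polynomial
variable `x^{(l)}_{ij}` of the commutative polynomial ring
`A = F[x^{(l)}_{ij} : 1 ≤ i,j ≤ n, 1 ≤ l ≤ m]`. -/
noncomputable def genericMatrix (F : Type) [Field F] (n m : ℕ) (l : Fin m) :
    Matrix (Fin n) (Fin n) (MvPolynomial (Fin m × Fin n × Fin n) F) :=
  Matrix.of fun i j => MvPolynomial.X (l, i, j)

/-- The algebra `R_{n,m}` of `m` generic `n × n` matrices: the `F`-subalgebra of `Mₙ(A)`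
generated by the generic matrices `X₁, …, X_m`. -/
noncomputable def genericMatrixAlgebra (F : Type) [Field F] (n m : ℕ) :
    Subalgebra F (Matrix (Fin n) (Fin n) (MvPolynomial (Fin m × Fin n × Fin n) F)) :=
  Algebra.adjoin F (Set.range (genericMatrix F n m))

open Amitsur

/-- **Amitsur's theorem.** The algebra `R_{n,m}` of `m` generic `n × n` matrices over a
field `F` has no zero divisors: if `u, v ∈ R_{n,m}` and `u * v = 0` then `u = 0` or
`v = 0`. -/
theorem generic_matrix_algebra_is_domain (F : Type) [Field F] (n m : ℕ)
    (hn : 1 ≤ n) (hm : 1 ≤ m)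
    (u v : Matrix (Fin n) (Fin n) (MvPolynomial (Fin m × Fin n × Fin n) F))
    (hu : u ∈ genericMatrixAlgebra F n m) (hv : v ∈ genericMatrixAlgebra F n m)
    (huv : u * v = 0) : u = 0 ∨ v = 0 := by
  haveI : NeZero n := ⟨by omega⟩
  by_contra hcon
  push_neg at hcon
  obtain ⟨hu0, hv0⟩ := hcon
  -- find entries whose Θ-image is nonzero
  have hue : ∃ ij : Fin n × Fin n, Theta F n m (u ij.1 ij.2) ≠ 0 := by
    by_contra h
    push_neg at h
    apply hu0
    apply Matrix.ext; intro i j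
    rw [Matrix.zero_apply]
    exact theta_zero F n m _ (h (i, j))
  have hve : ∃ ij : Fin n × Fin n, Theta F n m (v ij.1 ij.2) ≠ 0 := by
    by_contra h
    push_neg at h
    apply hv0
    apply Matrix.ext; intro i j
    rw [Matrix.zero_apply]
    exact theta_zero F n m _ (h (i, j))
  obtain ⟨⟨i0, j0⟩, hPne⟩ := hue
  obtain ⟨⟨i1, j1⟩, hQne⟩ := hve
  -- a common point where both are nonzero, with coordinates powers of t
  have hTinf : (Set.range (fun k : ℕ => tW F n ^ k)).Infinite :=
    Set.infinite_range_of_injective (tW_pow_injective F n)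
  obtain ⟨c, hcT, hc⟩ := exists_eval_ne F n _ hTinf
    (Theta F n m (u i0 j0) * Theta F n m (v i1 j1)) (mul_ne_zero hPne hQne)
  rw [map_mul] at hc
  have hcP : MvPolynomial.eval c (Theta F n m (u i0 j0)) ≠ 0 :=
    fun h => hc (by rw [h, zero_mul])
  have hcQ : MvPolynomial.eval c (Theta F n m (v i1 j1)) ≠ 0 :=
    fun h => hc (by rw [h, mul_zero])
  choose kf hkf using hcT
  -- the specialization matrices
  set d : Fin m → Matrix (Fin n) (Fin n) (PL F n) := fun l =>
    ∑ r : Fin n × Fin n,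
      Gm F n (Polynomial.X ^ kf (l, r) * Polynomial.C (y F n 0 ^ (r.1 : ℕ))) r.2 with hd
  have hdD : ∀ l, d l ∈ DD F n := by
    intro l
    refine ⟨fun i2 => ∑ q : Fin n,
      Polynomial.X ^ kf (l, (q, i2)) * Polynomial.C (y F n 0 ^ (q : ℕ)), ?_⟩
    rw [hd]
    simp only []
    rw [Fintype.sum_prod_type, Finset.sum_comm]
    exact Finset.sum_congr rfl fun i2 _ => (Gm_sum F n _ _ _).symm
  set ψ0 : MvPolynomial (Fin m × Fin n × Fin n) F →ₐ[F] PL F n :=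
    MvPolynomial.aeval (fun vv : Fin m × Fin n × Fin n => d vv.1 vv.2.1 vv.2.2) with hψ
  -- the key identity
  have hkey : ∀ s : MvPolynomial (Fin m × Fin n × Fin n) F,
      iW F n (ψ0 s) = MvPolynomial.eval c (Theta F n m s) := by
    have heq : (iW F n).comp ψ0.toRingHom
        = (MvPolynomial.eval c).comp (Theta F n m).toRingHom := by
      apply MvPolynomial.ringHom_ext
      · intro f
        simp only [RingHom.comp_apply, AlgHom.toRingHom_eq_coe, RingHom.coe_coe]
        rw [show ψ0 (MvPolynomial.C f) = algebraMap F (PL F n) f from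
            MvPolynomial.aeval_C _ f,
          show (Theta F n m) (MvPolynomial.C f)
            = algebraMap F (MvPolynomial (Fin m × Fin n × Fin n) (W F n)) f from
            MvPolynomial.aeval_C _ f,
          MvPolynomial.algebraMap_apply, MvPolynomial.eval_C, iW,
          ← IsScalarTower.algebraMap_apply]
      · intro v
        simp only [RingHom.comp_apply, AlgHom.toRingHom_eq_coe, RingHom.coe_coe]
        rw [show ψ0 (MvPolynomial.X v) = d v.1 v.2.1 v.2.2 from MvPolynomial.aeval_X _ v,
          show (Theta F n m) (MvPolynomial.X v) = ∑ r : Fin n × Fin n,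
            MvPolynomial.X (v.1, r) * MvPolynomial.C (eW F n r v.2.1 v.2.2) from
            MvPolynomial.aeval_X _ v]
        simp only [map_sum, map_mul, MvPolynomial.eval_X, MvPolynomial.eval_C]
        rw [hd]
        simp only [Matrix.sum_apply]
        rw [map_sum]
        refine Finset.sum_congr rfl fun r _ => ?_
        rw [iW_Gm_entry, show tW F n ^ kf (v.1, r) = c (v.1, r) from hkf (v.1, r)]
    exact fun s => congrFun (congrArg (fun h => h.toFun) heq) s
  -- the evaluation homomorphism on matrices
  set Ψ := ψ0.mapMatrix (m := Fin n) with hΨ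
  have hΨmem : ∀ x ∈ genericMatrixAlgebra F n m, Ψ x ∈ DD F n := by
    intro x hx
    induction hx using Algebra.adjoin_induction with
    | mem x hxs =>
        obtain ⟨l, rfl⟩ := hxs
        have : Ψ (genericMatrix F n m l) = d l := by
          apply Matrix.ext; intro i j
          rw [hΨ, AlgHom.mapMatrix_apply, Matrix.map_apply]
          exact MvPolynomial.aeval_X _ (l, i, j)
        rw [this]
        exact hdD l
    | algebraMap f => rw [AlgHom.commutes]; exact Subalgebra.algebraMap_mem _ f
    | add x y hx hy ihx ihy => rw [map_add]; exact Subalgebra.add_mem _ ihx ihy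
    | mul x y hx hy ihx ihy => rw [map_mul]; exact Subalgebra.mul_mem _ ihx ihy
  have hΨu : Ψ u ≠ 0 := by
    intro h
    apply hcP
    rw [← hkey]
    have : ψ0 (u i0 j0) = 0 := by
      have := congrFun (congrFun h i0) j0
      rwa [hΨ, AlgHom.mapMatrix_apply, Matrix.map_apply, Matrix.zero_apply] at this
    rw [this, map_zero]
  have hΨv : Ψ v ≠ 0 := by
    intro h
    apply hcQ
    rw [← hkey]
    have : ψ0 (v i1 j1) = 0 := by
      have := congrFun (congrFun h i1) j1
      rwa [hΨ, AlgHom.mapMatrix_apply, Matrix.map_apply, Matrix.zero_apply] at this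
    rw [this, map_zero]
  have : Ψ u * Ψ v = 0 := by rw [← map_mul, huv, map_zero]
  exact DD_mul_ne_zero F n (hΨmem u hu) (hΨmem v hv) hΨu hΨv this
end

section
/- Let F be a field, r ≥ 1, and let A be a unital F-algebra containing a unital F-subalgebra S isomorphic to the matrix algebra M_r(F) (with the same multiplicative identity as A). Then A is isomorphic as an F-algebra to M_r(B), where B is the centralizer of S in A, i.e. B = {a ∈ A : as = sa for all s ∈ S}. -/
/-- If a unital `F`-algebra `A` contains a unital `F`-subalgebra `S` isomorphic to the
matrix algebra `M_r(F)`, then `A` is isomorphic as an `F`-algebra to `M_r(B)` where `B` is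
the centralizer of `S` in `A`. -/
theorem matrix_subalgebra_centralizer (F : Type) [Field F] (r : ℕ) (hr : 1 ≤ r)
    (A : Type) [Ring A] [Algebra F A] (S : Subalgebra F A)
    (e : S ≃ₐ[F] Matrix (Fin r) (Fin r) F) :
    Nonempty (A ≃ₐ[F] Matrix (Fin r) (Fin r)
      (Subalgebra.centralizer F (S : Set A))) := by
  classical
  set B := Subalgebra.centralizer F (S : Set A) with hBdef
  -- matrix units
  set E : Fin r → Fin r → A := fun i j => (e.symm (Matrix.single i j 1) : A) with hEdef
  have hE : ∀ i j k l, E i j * E k l = if j = k then E i l else 0 := by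
    intro i j k l
    have h1 : E i j * E k l =
        ((e.symm (Matrix.single i j 1 * Matrix.single k l 1) : S) : A) := by
      rw [map_mul]; rfl
    by_cases h : j = k
    · subst h
      rw [h1, Matrix.single_mul_single_same, one_mul, if_pos rfl]
    · rw [h1, Matrix.single_mul_single_of_ne (h := h), map_zero, if_neg h]
      rfl
  have hone : ∑ i, E i i = (1 : A) := by
    have h1 : (∑ i, Matrix.single i i (1 : F)) = (1 : Matrix (Fin r) (Fin r) F) := by
      ext a b
      rw [Matrix.sum_apply]
      by_cases h : a = b
      · subst h
        rw [Matrix.one_apply_eq, Finset.sum_eq_single a]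
        · simp [Matrix.single]
        · intro k _ hk
          simp only [Matrix.single, Matrix.of_apply, ite_eq_right_iff, and_imp]
          rintro rfl
          exact fun _ => absurd rfl hk
        · simp
      · rw [Matrix.one_apply_ne h]
        apply Finset.sum_eq_zero
        intro k _
        simp only [Matrix.single, Matrix.of_apply, ite_eq_right_iff, and_imp]
        rintro rfl rfl
        exact absurd rfl h
    calc ∑ i, E i i = ((∑ i, e.symm (Matrix.single i i 1) : S) : A) := by
          push_cast; rfl
      _ = ((e.symm (∑ i, Matrix.single i i (1 : F)) : S) : A) := by rw [map_sum]
      _ = ((1 : S) : A) := by rw [h1, map_one]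
      _ = 1 := rfl
  -- every element of S is a linear combination of the E i j
  have hspan : ∀ s : S, (s : A) = ∑ i, ∑ j, (e s i j) • E i j := by
    intro s
    conv_lhs => rw [← e.symm_apply_apply s, Matrix.matrix_eq_sum_single (e s)]
    rw [map_sum]
    push_cast
    refine Finset.sum_congr rfl fun i _ => ?_
    rw [map_sum]
    push_cast
    refine Finset.sum_congr rfl fun j _ => ?_
    have h2 : Matrix.single i j (e s i j) = (e s i j) • Matrix.single i j 1 := by
      rw [Matrix.smul_single, smul_eq_mul, mul_one]
    rw [h2, map_smul]
    simp [hEdef]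
  -- commuting with all E i j implies membership in the centralizer
  have hcomm : ∀ x : A, (∀ i j, E i j * x = x * E i j) → x ∈ B := by
    intro x hx
    rw [hBdef, Subalgebra.mem_centralizer_iff]
    rintro g hg
    rw [show g = ((⟨g, hg⟩ : S) : A) from rfl, hspan ⟨g, hg⟩]
    rw [Finset.sum_mul, Finset.mul_sum]
    refine Finset.sum_congr rfl fun i _ => ?_
    rw [Finset.sum_mul, Finset.mul_sum]
    refine Finset.sum_congr rfl fun j _ => ?_
    rw [smul_mul_assoc, mul_smul_comm, hx]
  -- each E i j is in S
  have hES : ∀ i j, E i j ∈ S := fun i j => (e.symm (Matrix.single i j 1)).2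
  -- elements of B commute with E i j
  have hBE : ∀ (b : B) i j, (b : A) * E i j = E i j * (b : A) := by
    intro b i j
    exact (Subalgebra.mem_centralizer_iff F |>.mp b.2 (E i j) (hES i j)).symm
  -- the forward map entries
  have hmem : ∀ (a : A) (i j : Fin r), (∑ k, E k i * a * E j k) ∈ B := by
    intro a i j
    refine hcomm _ fun p q => ?_
    rw [Finset.mul_sum, Finset.sum_mul]
    rw [Finset.sum_eq_single q, Finset.sum_eq_single p]
    · rw [← mul_assoc, ← mul_assoc, hE p q q i, if_pos rfl, mul_assoc, mul_assoc,
        hE j p p q, if_pos rfl, mul_assoc]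
    · intro k _ hk
      rw [mul_assoc, mul_assoc, hE j k p q, if_neg (by simpa using hk), mul_zero, mul_zero]
    · simp
    · intro k _ hk
      rw [← mul_assoc, ← mul_assoc, hE p q k i, if_neg (Ne.symm hk), zero_mul, zero_mul]
    · simp
  set φ : A → Matrix (Fin r) (Fin r) B :=
    fun a => Matrix.of fun i j => (⟨∑ k, E k i * a * E j k, hmem a i j⟩ : B) with hφdef
  set ψ : Matrix (Fin r) (Fin r) B → A :=
    fun M => ∑ i, ∑ j, ((M i j : A) * E i j) with hψdef
  have hφψ : ∀ M, φ (ψ M) = M := by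
    intro M
    ext i j
    show (∑ k, E k i * (∑ p, ∑ q, ((M p q : A) * E p q)) * E j k) = (M i j : A)
    have hterm : ∀ k, E k i * (∑ p, ∑ q, ((M p q : A) * E p q)) * E j k
        = (M i j : A) * E k k := by
      intro k
      rw [Finset.mul_sum, Finset.sum_mul]
      rw [Finset.sum_eq_single i]
      · rw [Finset.mul_sum, Finset.sum_mul, Finset.sum_eq_single j]
        · rw [← mul_assoc (E k i) ((M i j : A)) (E i j),
            mul_assoc (E k i * (M i j : A)), hE i j j k, if_pos rfl,
            ← hBE (M i j) k i, mul_assoc ((M i j : A)), hE k i i k, if_pos rfl]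
        · intro q _ hq
          rw [mul_assoc (E k i), mul_assoc ((M i q : A)), hE i q j k, if_neg hq]
          simp
        · simp
      · intro p _ hp
        rw [Finset.mul_sum, Finset.sum_mul]
        apply Finset.sum_eq_zero
        intro q _
        rw [← mul_assoc (E k i) ((M p q : A)) (E p q), ← hBE (M p q) k i,
          mul_assoc ((M p q : A)), hE k i p q, if_neg (Ne.symm hp)]
        simp
      · simp
    rw [Finset.sum_congr rfl fun k _ => hterm k, ← Finset.mul_sum, hone, mul_one]
  have hψφ : ∀ a, ψ (φ a) = a := by
    intro a
    show (∑ i, ∑ j, ((∑ k, E k i * a * E j k) * E i j)) = a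
    have hterm : ∀ i j, (∑ k, E k i * a * E j k) * E i j = E i i * a * E j j := by
      intro i j
      rw [Finset.sum_mul, Finset.sum_eq_single i]
      · rw [mul_assoc (E i i * a), hE j i i j, if_pos rfl]
      · intro k _ hk
        rw [mul_assoc (E k i * a), hE j k i j, if_neg hk, mul_zero]
      · simp
    calc (∑ i, ∑ j, ((∑ k, E k i * a * E j k) * E i j))
        = ∑ i, ∑ j, E i i * a * E j j := by
          exact Finset.sum_congr rfl fun i _ => Finset.sum_congr rfl fun j _ => hterm i j
      _ = (∑ i, E i i) * (a * (∑ j, E j j)) := by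
          rw [Finset.sum_mul]
          refine Finset.sum_congr rfl fun i _ => ?_
          rw [Finset.mul_sum, Finset.mul_sum]
          refine Finset.sum_congr rfl fun j _ => ?_
          rw [mul_assoc]
      _ = a := by rw [hone, one_mul, mul_one]
  have hmul : ∀ a b : A, φ (a * b) = φ a * φ b := by
    intro a b
    ext i j
    rw [Matrix.mul_apply, AddSubmonoidClass.coe_finset_sum]
    simp only [MulMemClass.coe_mul]
    show (∑ k, E k i * (a * b) * E j k)
      = ∑ l, ((∑ k, E k i * a * E l k) * (∑ m, E m l * b * E j m))
    have hterm : ∀ l, (∑ k, E k i * a * E l k) * (∑ m, E m l * b * E j m)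
        = ∑ k, E k i * a * (E l l * b) * E j k := by
      intro l
      rw [Finset.sum_mul]
      refine Finset.sum_congr rfl fun k _ => ?_
      rw [Finset.mul_sum, Finset.sum_eq_single k]
      · rw [mul_assoc (E k i * a), ← mul_assoc (E l k), ← mul_assoc (E l k) (E k l) b,
          hE l k k l, if_pos rfl, ← mul_assoc (E k i * a) (E l l * b) (E j k)]
      · intro m _ hm
        rw [mul_assoc (E k i * a), ← mul_assoc (E l k), ← mul_assoc (E l k) (E m l) b,
          hE l k m l, if_neg (Ne.symm hm)]
        simp
      · simp
    rw [Finset.sum_congr rfl fun l _ => hterm l, Finset.sum_comm]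
    refine Finset.sum_congr rfl fun k _ => ?_
    have h3 : ∑ l, E k i * a * (E l l * b) * E j k = E k i * a * ((∑ l, E l l) * b) * E j k := by
      rw [Finset.sum_mul, Finset.mul_sum, Finset.sum_mul]
    rw [h3, hone, one_mul, mul_assoc (E k i), ← mul_assoc (E k i) (a * b) (E j k), ← mul_assoc (E k i) a b]
  have hadd : ∀ a b : A, φ (a + b) = φ a + φ b := by
    intro a b
    ext i j
    rw [Matrix.add_apply, AddMemClass.coe_add]
    show (∑ k, E k i * (a + b) * E j k)
      = ((∑ k, E k i * a * E j k) + (∑ k, E k i * b * E j k) : A)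
    rw [← Finset.sum_add_distrib]
    refine Finset.sum_congr rfl fun k _ => ?_
    rw [mul_add, add_mul]
  have hcommutes : ∀ c : F, φ (algebraMap F A c) = algebraMap F (Matrix (Fin r) (Fin r) B) c := by
    intro c
    ext i j
    rw [Matrix.algebraMap_matrix_apply]
    by_cases h : i = j
    · subst h
      rw [if_pos rfl, Subalgebra.coe_algebraMap]
      show (∑ k, E k i * (algebraMap F A c) * E i k) = algebraMap F A c
      simp only [Algebra.algebraMap_eq_smul_one, mul_smul_comm, smul_mul_assoc, mul_one]
      have h4 : ∀ k : Fin r, c • (E k i * E i k) = c • E k k := fun k => by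
        rw [hE k i i k, if_pos rfl]
      rw [Finset.sum_congr rfl fun k _ => h4 k, ← Finset.smul_sum, hone]
    · rw [if_neg h, ZeroMemClass.coe_zero]
      show (∑ k, E k i * (algebraMap F A c) * E j k) = 0
      simp only [Algebra.algebraMap_eq_smul_one, mul_smul_comm, smul_mul_assoc, mul_one]
      apply Finset.sum_eq_zero
      intro k _
      rw [hE k i j k, if_neg h, smul_zero]
  have hzero : φ 0 = 0 := by
    ext i j
    show (∑ k, E k i * (0 : A) * E j k) = ((0 : Matrix (Fin r) (Fin r) B) i j : A)
    simp
  have hone' : φ 1 = 1 := by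
    have := hcommutes 1
    rwa [map_one, map_one] at this
  let φh : A →ₐ[F] Matrix (Fin r) (Fin r) B :=
    { toFun := φ, map_one' := hone', map_mul' := hmul, map_zero' := hzero,
      map_add' := hadd, commutes' := hcommutes }
  exact ⟨AlgEquiv.ofBijective φh
    (Function.bijective_iff_has_inverse.mpr ⟨ψ, hψφ, hφψ⟩)⟩
end
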